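/- There exists a DDR strategy (in the one-state game with two actions) that is not outcome-equivalent to any RRD strategy. -/

import Mathlib

open Filter
open scoped Classical

/-- A stochastic Mealy machine for the one-state game with two actions
(`true` = action a, `false` = action b). -/
structure OneMealy (n : ℕ) where
  init : Fin n → ℝ
  next : Fin n → Bool → ℝ
  up : Fin n → Bool → Fin n → ℝ

def Proper {n : ℕ} (N : OneMealy n) : Prop :=
  (∀ m, 0 ≤ N.init m) ∧ (∑ m, N.init m) = 1 ∧
  (∀ m c, 0 ≤ N.next m c) ∧ (∀ m, ∑ c, N.next m c = 1) ∧
  (∀ m c m', 0 ≤ N.up m c m') ∧ ∀ m c, ∑ m', N.up m c m' = 1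

def IsDirac {α : Type} (μ : α → ℝ) : Prop := ∃ x, ∀ y, μ y = if y = x then 1 else 0

def DetInit {n : ℕ} (N : OneMealy n) : Prop := IsDirac N.init
def DetNext {n : ℕ} (N : OneMealy n) : Prop := ∀ m, IsDirac (N.next m)
def DetUp {n : ℕ} (N : OneMealy n) : Prop := ∀ m c, IsDirac (N.up m c)

/-- Bayesian update of the memory distribution upon playing action `c`. -/
noncomputable def ostep {n : ℕ} (N : OneMealy n) (μ : Fin n → ℝ) (c : Bool) :
    Fin n → ℝ :=
  if (∑ m', μ m' * N.next m' c) = 0 then fun m => ∑ m', μ m' * N.up m' c m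
  else fun m => (∑ m', μ m' * N.up m' c m * N.next m' c) / (∑ m', μ m' * N.next m' c)

/-- Distribution over memory states after the word `w` of actions. -/
noncomputable def omemDist {n : ℕ} (N : OneMealy n) (w : List Bool) : Fin n → ℝ :=
  w.foldl (ostep N) N.init

/-- The strategy induced by the machine. -/
noncomputable def oStrat {n : ℕ} (N : OneMealy n) (w : List Bool) (c : Bool) : ℝ :=
  ∑ m, omemDist N w m * N.next m c

/-- Probability of the cylinder of the finite action word `l` under strategy `σ`. -/
def cylProb (σ : List Bool → Bool → ℝ) (l : List Bool) : ℝ :=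
  ∏ i ∈ Finset.range l.length, σ (l.take i) (l.getD i false)

/-- Outcome equivalence in the one-state game: identical cylinder probabilities. -/
noncomputable def OEquiv {n k : ℕ} (N : OneMealy n) (B : OneMealy k) : Prop :=
  ∀ w : List Bool, cylProb (oStrat N) w = cylProb (oStrat B) w

/-- Consistency of an action word with a strategy. -/
def consistentW (σ : List Bool → Bool → ℝ) (w : List Bool) : Prop :=
  ∀ i < w.length, 0 < σ (w.take i) (w.getD i false)

/-! ### Generic lemmas -/

lemma cylProb_append (σ : List Bool → Bool → ℝ) (w : List Bool) (c : Bool) :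
    cylProb σ (w ++ [c]) = cylProb σ w * σ w c := by
  unfold cylProb
  rw [List.length_append, List.length_singleton, Finset.prod_range_succ]
  congr 1
  · apply Finset.prod_congr rfl
    intro i hi
    rw [Finset.mem_range] at hi
    rw [List.take_append_of_le_length (le_of_lt hi)]
    congr 1
    rw [List.getD_eq_getElem?_getD, List.getD_eq_getElem?_getD, List.getElem?_append,
      if_pos hi]
  · rw [List.take_left]
    congr 1
    simp [List.getD]

lemma take_consistent (σ : List Bool → Bool → ℝ) (w : List Bool)
    (hw : consistentW σ w) (i : ℕ) : consistentW σ (w.take i) := by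
  intro j hj
  rw [List.length_take] at hj
  have hjw : j < w.length := lt_of_lt_of_le hj (min_le_right _ _)
  have hji : j < i := lt_of_lt_of_le hj (min_le_left _ _)
  rw [List.take_take, min_eq_left (le_of_lt hji)]
  have : (w.take i).getD j false = w.getD j false := by
    rw [List.getD_eq_getElem?_getD, List.getD_eq_getElem?_getD, List.getElem?_take, if_pos hji]
  rw [this]
  exact hw j hjw

lemma consistent_append_iff (σ : List Bool → Bool → ℝ) (w : List Bool) (c : Bool) :
    consistentW σ (w ++ [c]) ↔ consistentW σ w ∧ 0 < σ w c := by
  constructor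
  · intro h
    constructor
    · intro i hi
      have := h i (by simp; omega)
      rwa [List.take_append_of_le_length (le_of_lt hi),
        List.getD_eq_getElem?_getD, List.getElem?_append, if_pos hi,
        ← List.getD_eq_getElem?_getD] at this
    · have := h w.length (by simp)
      rwa [List.take_left, List.getD_eq_getElem?_getD,
        List.getElem?_concat_length] at this
  · rintro ⟨h1, h2⟩ i hi
    rw [List.length_append, List.length_singleton] at hi
    rcases Nat.lt_or_ge i w.length with h | h
    · rw [List.take_append_of_le_length (le_of_lt h),
        List.getD_eq_getElem?_getD, List.getElem?_append, if_pos h,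
        ← List.getD_eq_getElem?_getD]
      exact h1 i h
    · have hieq : i = w.length := by omega
      subst hieq
      rwa [List.take_left, List.getD_eq_getElem?_getD, List.getElem?_concat_length]

lemma cylProb_pos (σ : List Bool → Bool → ℝ) (w : List Bool)
    (hw : consistentW σ w) : 0 < cylProb σ w := by
  apply Finset.prod_pos
  intro i hi
  rw [Finset.mem_range] at hi
  exact hw i hi

lemma omemDist_append {n : ℕ} (N : OneMealy n) (w : List Bool) (c : Bool) :
    omemDist N (w ++ [c]) = ostep N (omemDist N w) c := by
  simp [omemDist, List.foldl_append]

lemma omemDist_nonneg {n : ℕ} (N : OneMealy n) (hN : Proper N) (w : List Bool) :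
    ∀ m, 0 ≤ omemDist N w m := by
  obtain ⟨h1, h2, h3, h4, h5, h6⟩ := hN
  induction w using List.reverseRecOn with
  | nil => exact h1
  | append_singleton w c ih =>
    rw [omemDist_append]
    unfold ostep
    split_ifs with hd
    · intro m
      exact Finset.sum_nonneg fun m' _ => mul_nonneg (ih m') (h5 m' c m)
    · intro m
      apply div_nonneg
      · exact Finset.sum_nonneg fun m' _ =>
          mul_nonneg (mul_nonneg (ih m') (h5 m' c m)) (h3 m' c)
      · exact Finset.sum_nonneg fun m' _ => mul_nonneg (ih m') (h3 m' c)

lemma oStrat_nonneg {n : ℕ} (N : OneMealy n) (hN : Proper N) (w : List Bool) (c : Bool) :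
    0 ≤ oStrat N w c :=
  Finset.sum_nonneg fun m _ => mul_nonneg (omemDist_nonneg N hN w m) (hN.2.2.1 m c)

lemma omemDist_sum {n : ℕ} (N : OneMealy n) (hN : Proper N) (w : List Bool)
    (hw : consistentW (oStrat N) w) : ∑ m, omemDist N w m = 1 := by
  obtain ⟨h1, h2, h3, h4, h5, h6⟩ := hN
  induction w using List.reverseRecOn with
  | nil => exact h2
  | append_singleton w c ih =>
    rw [consistent_append_iff] at hw
    obtain ⟨hw1, hw2⟩ := hw
    have hsum : (∑ m', omemDist N w m' * N.next m' c) = oStrat N w c := rfl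
    have hne : (∑ m', omemDist N w m' * N.next m' c) ≠ 0 := by
      rw [hsum]; exact ne_of_gt hw2
    rw [omemDist_append]
    unfold ostep
    rw [if_neg hne]
    rw [← Finset.sum_div]
    rw [div_eq_one_iff_eq hne]
    rw [Finset.sum_comm]
    apply Finset.sum_congr rfl
    intro m' _
    have : ∑ m, omemDist N w m' * N.up m' c m = omemDist N w m' := by
      rw [← Finset.mul_sum, h6 m' c, mul_one]
    calc ∑ m, omemDist N w m' * N.up m' c m * N.next m' c
        = (∑ m, omemDist N w m' * N.up m' c m) * N.next m' c := by rw [Finset.sum_mul]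
      _ = omemDist N w m' * N.next m' c := by rw [this]

/-- Transfer of strategies along outcome equivalence, on consistent words. -/
lemma strat_transfer {n k : ℕ} (N : OneMealy n) (B : OneMealy k)
    (hOE : OEquiv N B) (w : List Bool) (hw : consistentW (oStrat N) w) (c : Bool) :
    oStrat B w c = oStrat N w c := by
  have h1 : cylProb (oStrat N) w = cylProb (oStrat B) w := hOE w
  have h2 : cylProb (oStrat N) (w ++ [c]) = cylProb (oStrat B) (w ++ [c]) := hOE _
  rw [cylProb_append, cylProb_append, h1] at h2
  have hpos : 0 < cylProb (oStrat N) w := cylProb_pos _ _ hw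
  rw [h1] at hpos
  exact (mul_left_cancel₀ (ne_of_gt hpos) h2.symm)

lemma consistent_transfer {n k : ℕ} (N : OneMealy n) (B : OneMealy k)
    (hOE : OEquiv N B) (w : List Bool) (hw : consistentW (oStrat N) w) :
    consistentW (oStrat B) w := by
  intro i hi
  rw [strat_transfer N B hOE _ (take_consistent _ _ hw i)]
  exact hw i hi

/-! ### The machine N -/

noncomputable def Nmach : OneMealy 4 where
  init := ![1,0,0,0]
  next := fun m c => if c then ![0,1,0,0] m else ![1,0,1,1] m
  up := fun m c =>
    if c then ![![1,0,0,0],![1,0,0,0],![1,0,0,0],![0,0,0,1]] m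
    else ![![0,1/4,1/4,1/2],![1,0,0,0],![0,1/2,1/2,0],![0,0,0,1]] m

noncomputable def e0 : Fin 4 → ℝ := ![1,0,0,0]
noncomputable def vN (t : ℝ) : Fin 4 → ℝ := ![0,t,t,1-2*t]

lemma Nmach_proper : Proper Nmach := by
  refine ⟨?_, ?_, ?_, ?_, ?_, ?_⟩
  · intro m; unfold Nmach; fin_cases m <;> norm_num
  · unfold Nmach; rw [Fin.sum_univ_four]; norm_num [Matrix.cons_val_two, Matrix.cons_val_three]
  · intro m c; unfold Nmach; fin_cases m <;> cases c <;> norm_num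
  · intro m; unfold Nmach; rw [Fintype.sum_bool]; fin_cases m <;> norm_num
  · intro m c m'; unfold Nmach; fin_cases m <;> cases c <;> fin_cases m' <;> norm_num
  · intro m c
    unfold Nmach
    fin_cases m <;> cases c <;> rw [Fin.sum_univ_four] <;> norm_num [Matrix.cons_val_two, Matrix.cons_val_three]

lemma Nmach_detInit : DetInit Nmach := by
  refine ⟨0, fun y => ?_⟩
  unfold Nmach
  fin_cases y
  · norm_num
  · rw [if_neg (by decide)]; norm_num
  · rw [if_neg (by decide)]; norm_num
  · rw [if_neg (by decide)]; norm_num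

lemma Nmach_detNext : DetNext Nmach := by
  intro m
  by_cases h : m = 1
  · exact ⟨true, fun c => by subst h; unfold Nmach; cases c <;> norm_num⟩
  · refine ⟨false, fun c => ?_⟩
    unfold Nmach
    fin_cases m <;> cases c <;> simp_all <;> norm_num

lemma sum_e0 (c : Bool) : ∑ m, e0 m * Nmach.next m c = if c then 0 else 1 := by
  unfold e0 Nmach
  rw [Fin.sum_univ_four]
  cases c <;> norm_num [Matrix.cons_val_two, Matrix.cons_val_three]

lemma sum_vN (t : ℝ) (c : Bool) :
    ∑ m, vN t m * Nmach.next m c = if c then t else 1 - t := by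
  unfold vN Nmach
  rw [Fin.sum_univ_four]
  cases c <;> norm_num [Matrix.cons_val_two, Matrix.cons_val_three] <;> ring

lemma ostep_e0_b : ostep Nmach e0 false = vN (1/4) := by
  unfold ostep
  rw [if_neg (by rw [sum_e0]; norm_num)]
  funext m
  rw [sum_e0]
  unfold e0 vN Nmach
  fin_cases m <;> rw [Fin.sum_univ_four] <;> norm_num [Matrix.cons_val_two, Matrix.cons_val_three]

lemma ostep_vN_a (t : ℝ) (ht : 0 < t) : ostep Nmach (vN t) true = e0 := by
  have htne := ne_of_gt ht
  unfold ostep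
  rw [if_neg (by rw [sum_vN]; simpa using htne)]
  funext m
  rw [sum_vN]
  unfold e0 vN Nmach
  fin_cases m <;> rw [Fin.sum_univ_four] <;> norm_num [Matrix.cons_val_two, Matrix.cons_val_three] <;> exact htne

lemma ostep_vN_b (t : ℝ) (ht : 0 < t) (ht2 : t < 1/2) :
    ostep Nmach (vN t) false = vN (t / (2 * (1 - t))) := by
  have h1 : (1:ℝ) - t ≠ 0 := by linarith
  unfold ostep
  rw [if_neg (by rw [sum_vN]; simpa using h1)]
  funext m
  rw [sum_vN]
  unfold vN Nmach
  fin_cases m <;> rw [Fin.sum_univ_four] <;> norm_num [Matrix.cons_val_two, Matrix.cons_val_three] <;> field_simp <;> ring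

lemma oStrat_e0 (w : List Bool) (h : omemDist Nmach w = e0) (c : Bool) :
    oStrat Nmach w c = if c then 0 else 1 := by
  unfold oStrat; rw [h]; exact sum_e0 c

lemma oStrat_vN (w : List Bool) (t : ℝ) (h : omemDist Nmach w = vN t) (c : Bool) :
    oStrat Nmach w c = if c then t else 1 - t := by
  unfold oStrat; rw [h]; exact sum_vN t c

/-- The invariant on reachable memory distributions of N. -/
lemma invN (w : List Bool) (hw : consistentW (oStrat Nmach) w) :
    omemDist Nmach w = e0 ∨ ∃ t, 0 < t ∧ t < 1/2 ∧ omemDist Nmach w = vN t := by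
  induction w using List.reverseRecOn with
  | nil =>
    left
    funext m
    rfl
  | append_singleton w c ih =>
    rw [consistent_append_iff] at hw
    obtain ⟨hw1, hw2⟩ := hw
    rcases ih hw1 with h | ⟨t, ht0, ht1, h⟩
    · -- from e0, only c = false is consistent
      cases c with
      | true =>
        exfalso
        rw [oStrat_e0 w h true] at hw2
        simp at hw2
      | false =>
        right
        exact ⟨1/4, by norm_num [Fin.ext_iff], by norm_num [Fin.ext_iff], by rw [omemDist_append, h, ostep_e0_b]⟩
    · cases c with
      | true =>
        left
        rw [omemDist_append, h, ostep_vN_a t ht0]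
      | false =>
        right
        refine ⟨t / (2 * (1 - t)), ?_, ?_, by rw [omemDist_append, h, ostep_vN_b t ht0 ht1]⟩
        · apply div_pos ht0; linarith
        · rw [div_lt_iff₀ (by linarith)]; linarith

/-- The chain of words `w₀ ++ bᵏ⁺¹` in N: memory is `vN t` with the key
cylinder-probability lower bound. -/
lemma N_chain (w₀ : List Bool) (hw₀ : consistentW (oStrat Nmach) w₀) :
    ∃ t₁, 0 < t₁ ∧ t₁ < 1/2 ∧ ∀ j : ℕ,
      ∃ t, 0 < t ∧ t < 1/2 ∧
        consistentW (oStrat Nmach) (w₀ ++ List.replicate (j+1) false) ∧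
        omemDist Nmach (w₀ ++ List.replicate (j+1) false) = vN t ∧
        cylProb (oStrat Nmach) (w₀ ++ List.replicate (j+1) false) * (1 - 2*t)
          = cylProb (oStrat Nmach) (w₀ ++ [false]) * (1 - 2*t₁) := by
  -- first step
  have base : ∃ t₁, 0 < t₁ ∧ t₁ < 1/2 ∧
      consistentW (oStrat Nmach) (w₀ ++ [false]) ∧
      omemDist Nmach (w₀ ++ [false]) = vN t₁ := by
    rcases invN w₀ hw₀ with h | ⟨t, ht0, ht1, h⟩
    · refine ⟨1/4, by norm_num [Fin.ext_iff], by norm_num [Fin.ext_iff], ?_, by rw [omemDist_append, h, ostep_e0_b]⟩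
      rw [consistent_append_iff]
      exact ⟨hw₀, by rw [oStrat_e0 w₀ h false]; norm_num [Fin.ext_iff]⟩
    · refine ⟨t / (2 * (1 - t)), by apply div_pos ht0; linarith,
        by rw [div_lt_iff₀ (by linarith)]; linarith, ?_,
        by rw [omemDist_append, h, ostep_vN_b t ht0 ht1]⟩
      rw [consistent_append_iff]
      refine ⟨hw₀, ?_⟩
      rw [oStrat_vN w₀ t h false]
      simp; linarith
  obtain ⟨t₁, ht₁0, ht₁1, hcons1, hmem1⟩ := base
  refine ⟨t₁, ht₁0, ht₁1, ?_⟩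
  intro j
  induction j with
  | zero =>
    exact ⟨t₁, ht₁0, ht₁1, by simpa using hcons1, by simpa using hmem1, by simp⟩
  | succ j ih =>
    obtain ⟨t, ht0, ht1, hc, hm, hcyl⟩ := ih
    have hrep : w₀ ++ List.replicate (j+2) false
        = (w₀ ++ List.replicate (j+1) false) ++ [false] := by
      rw [List.append_assoc]
      congr 1
      rw [← List.replicate_succ' (n := j+1) (a := false)]
    have h1t : (1:ℝ) - t ≠ 0 := by linarith
    have hσb : oStrat Nmach (w₀ ++ List.replicate (j+1) false) false = 1 - t := by
      rw [oStrat_vN _ t hm false]; simp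
    refine ⟨t / (2 * (1 - t)), by apply div_pos ht0; linarith,
      by rw [div_lt_iff₀ (by linarith)]; linarith, ?_, ?_, ?_⟩
    · rw [hrep, consistent_append_iff]
      exact ⟨hc, by rw [hσb]; linarith⟩
    · rw [hrep, omemDist_append, hm, ostep_vN_b t ht0 ht1]
    · rw [hrep, cylProb_append, hσb, ← hcyl]
      field_simp
      ring

/-! ### Support lemmas for machines with deterministic updates -/

lemma supp_step {k : ℕ} (B : OneMealy k) (f : Fin k → Bool → Fin k)
    (hf : ∀ m c m', B.up m c m' = if m' = f m c then 1 else 0)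
    (μ : Fin k → ℝ) (c : Bool) (hpos : (∑ m', μ m' * B.next m' c) ≠ 0) :
    (Finset.univ.filter fun m => ostep B μ c m ≠ 0) ⊆
      (Finset.univ.filter fun m => μ m ≠ 0 ∧ B.next m c ≠ 0).image (fun m => f m c) := by
  intro m hm
  rw [Finset.mem_filter] at hm
  have hm2 := hm.2
  unfold ostep at hm2
  rw [if_neg hpos] at hm2
  have hnum : (∑ m', μ m' * B.up m' c m * B.next m' c) ≠ 0 := by
    intro h
    apply hm2
    rw [h, zero_div]
  obtain ⟨m', -, hm'⟩ := Finset.exists_ne_zero_of_sum_ne_zero hnum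
  have hμ : μ m' ≠ 0 := by
    intro h; apply hm'; rw [h, zero_mul, zero_mul]
  have hup : B.up m' c m ≠ 0 := by
    intro h; apply hm'; rw [h, mul_zero, zero_mul]
  have hnx : B.next m' c ≠ 0 := by
    intro h; apply hm'; rw [h, mul_zero]
  have hfm : f m' c = m := by
    by_contra h
    apply hup
    rw [hf m' c m, if_neg (fun hh => h hh.symm)]
  rw [Finset.mem_image]
  exact ⟨m', Finset.mem_filter.mpr ⟨Finset.mem_univ _, hμ, hnx⟩, hfm⟩

noncomputable def suppCard {k : ℕ} (B : OneMealy k) (w : List Bool) : ℕ :=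
  (Finset.univ.filter fun m => omemDist B w m ≠ 0).card

/-! ### Main theorem -/

/-- There exists a DDR strategy (deterministic initialisation and outputs,
randomised updates) in the one-state game with two actions that is not
outcome-equivalent to any RRD strategy (randomised initialisation and outputs,
deterministic updates). -/
theorem ddr_not_included_in_rrd :
    ∃ (n : ℕ) (N : OneMealy n), Proper N ∧ DetInit N ∧ DetNext N ∧
      ∀ (k : ℕ) (B : OneMealy k), Proper B → DetUp B → ¬ OEquiv N B := by
  refine ⟨4, Nmach, Nmach_proper, Nmach_detInit, Nmach_detNext, ?_⟩
  intro k B hPB hDB hOE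
  choose f hf0 using hDB
  have hf : ∀ m c m', B.up m c m' = if m' = f m c then 1 else 0 := fun m c m' => by
    rw [hf0 m c m']; congr
  have hBnonneg := omemDist_nonneg B hPB
  have htrans : ∀ w, consistentW (oStrat Nmach) w → ∀ c, oStrat B w c = oStrat Nmach w c :=
    fun w hw c => strat_transfer Nmach B hOE w hw c
  have hconsB : ∀ w, consistentW (oStrat Nmach) w → consistentW (oStrat B) w :=
    fun w hw => consistent_transfer Nmach B hOE w hw
  -- support cardinality and its minimum over consistent words
  let sc : List Bool → ℕ := fun w => suppCard B w
  have hS : (Set.univ ∩ {p | ∃ w, consistentW (oStrat Nmach) w ∧ sc w = p}).Nonempty := by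
    refine ⟨sc [], Set.mem_univ _, [], ?_, rfl⟩
    intro i hi
    simp at hi
  have hS' : {p | ∃ w, consistentW (oStrat Nmach) w ∧ sc w = p}.Nonempty := by
    obtain ⟨p, -, hp⟩ := hS; exact ⟨p, hp⟩
  obtain ⟨w₀, hw₀c, hw₀card⟩ := Nat.sInf_mem hS'
  have hmin : ∀ w, consistentW (oStrat Nmach) w → sc w₀ ≤ sc w :=
    fun w hw => hw₀card ▸ Nat.sInf_le ⟨w, hw, rfl⟩
  -- one-step support inclusion
  have hsub : ∀ w c, consistentW (oStrat Nmach) (w ++ [c]) →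
      (Finset.univ.filter fun m => omemDist B (w ++ [c]) m ≠ 0) ⊆
        ((Finset.univ.filter fun m => omemDist B w m ≠ 0 ∧ B.next m c ≠ 0).image
          (fun m => f m c)) := by
    intro w c hwc
    have h1 : (∑ m', omemDist B w m' * B.next m' c) ≠ 0 := by
      have h2 := (consistent_append_iff (oStrat B) w c).mp (hconsB _ hwc)
      exact ne_of_gt h2.2
    have h3 := supp_step B f hf (omemDist B w) c h1
    intro m hm
    apply h3
    rw [Finset.mem_filter] at hm ⊢
    rw [← omemDist_append]
    exact hm
  have hcard_le : ∀ w c, consistentW (oStrat Nmach) (w ++ [c]) → sc (w ++ [c]) ≤ sc w := by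
    intro w c h
    calc sc (w ++ [c])
        ≤ ((Finset.univ.filter fun m => omemDist B w m ≠ 0 ∧ B.next m c ≠ 0).image
            (fun m => f m c)).card := Finset.card_le_card (hsub w c h)
      _ ≤ (Finset.univ.filter fun m => omemDist B w m ≠ 0 ∧ B.next m c ≠ 0).card :=
          Finset.card_image_le
      _ ≤ sc w := by
          apply Finset.card_le_card
          intro m hm
          rw [Finset.mem_filter] at hm ⊢
          exact ⟨hm.1, hm.2.1⟩
  -- the chain of words in N
  obtain ⟨t₁, ht₁0, ht₁1, hchain⟩ := N_chain w₀ hw₀c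
  choose tF ht0 ht1 hWcons hWmem hWcyl using hchain
  set W : ℕ → List Bool := fun j => w₀ ++ List.replicate (j+1) false with hWdef
  have hWsucc : ∀ j, W (j+1) = W j ++ [false] := by
    intro j
    show w₀ ++ List.replicate (j+2) false = (w₀ ++ List.replicate (j+1) false) ++ [false]
    rw [List.append_assoc]
    congr 1
    rw [← List.replicate_succ' (n := j+1) (a := false)]
  have hW0 : W 0 = w₀ ++ [false] := by
    show w₀ ++ List.replicate 1 false = w₀ ++ [false]
    simp
  have hWtrue_cons : ∀ j, consistentW (oStrat Nmach) (W j ++ [true]) := by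
    intro j
    rw [consistent_append_iff]
    refine ⟨hWcons j, ?_⟩
    rw [oStrat_vN _ _ (hWmem j)]
    simpa using ht0 j
  have hcardW : ∀ j, sc (W j) = sc w₀ := by
    intro j
    induction j with
    | zero =>
      refine le_antisymm ?_ (hmin _ (hWcons 0))
      rw [hW0]
      exact hcard_le w₀ false (by rw [← hW0]; exact hWcons 0)
    | succ j ih =>
      refine le_antisymm ?_ (hmin _ (hWcons (j+1)))
      rw [hWsucc]
      exact le_trans (hcard_le (W j) false (by rw [← hWsucc]; exact hWcons (j+1))) (le_of_eq ih)
  -- every support state plays `true` with positive probability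
  have hnext_true : ∀ j m, omemDist B (W j) m ≠ 0 → B.next m true ≠ 0 := by
    intro j m hm
    have h1 : sc w₀ ≤ sc (W j ++ [true]) := hmin _ (hWtrue_cons j)
    have h2 := Finset.card_le_card (hsub (W j) true (hWtrue_cons j))
    have h3 : ((Finset.univ.filter fun m => omemDist B (W j) m ≠ 0 ∧ B.next m true ≠ 0).image
        (fun m => f m true)).card ≤
        (Finset.univ.filter fun m => omemDist B (W j) m ≠ 0 ∧ B.next m true ≠ 0).card :=
      Finset.card_image_le
    have h4 : (Finset.univ.filter fun m => omemDist B (W j) m ≠ 0 ∧ B.next m true ≠ 0) ⊆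
        (Finset.univ.filter fun m => omemDist B (W j) m ≠ 0) := by
      intro x hx
      rw [Finset.mem_filter] at hx ⊢
      exact ⟨hx.1, hx.2.1⟩
    have h5 : (Finset.univ.filter fun m => omemDist B (W j) m ≠ 0 ∧ B.next m true ≠ 0) =
        (Finset.univ.filter fun m => omemDist B (W j) m ≠ 0) := by
      apply Finset.eq_of_subset_of_card_le h4
      calc (Finset.univ.filter fun m => omemDist B (W j) m ≠ 0).card
          = sc (W j) := rfl
        _ = sc w₀ := hcardW j
        _ ≤ sc (W j ++ [true]) := h1
        _ = (Finset.univ.filter fun m => omemDist B (W j ++ [true]) m ≠ 0).card := rfl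
        _ ≤ ((Finset.univ.filter fun m => omemDist B (W j) m ≠ 0 ∧ B.next m true ≠ 0).image
              (fun m => f m true)).card := h2
        _ ≤ (Finset.univ.filter fun m => omemDist B (W j) m ≠ 0 ∧ B.next m true ≠ 0).card := h3
    have hmem : m ∈ (Finset.univ.filter fun m => omemDist B (W j) m ≠ 0) :=
      Finset.mem_filter.mpr ⟨Finset.mem_univ _, hm⟩
    rw [← h5, Finset.mem_filter] at hmem
    exact hmem.2.2
  -- the bound β < 1
  have hsum1 : ∀ j, ∑ m, omemDist B (W j) m = 1 :=
    fun j => omemDist_sum B hPB _ (hconsB _ (hWcons j))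
  have hmne : ∃ m, omemDist B (W 0) m ≠ 0 := by
    by_contra h
    push_neg at h
    have := hsum1 0
    rw [Finset.sum_eq_zero (fun m _ => h m)] at this
    norm_num at this
  obtain ⟨m₀, hm₀⟩ := hmne
  set P : Finset (Fin k) := Finset.univ.filter (fun m => B.next m true ≠ 0) with hP
  have hm₀P : m₀ ∈ P := Finset.mem_filter.mpr ⟨Finset.mem_univ _, hnext_true 0 m₀ hm₀⟩
  have hPne : (P.image fun m => B.next m false).Nonempty :=
    ⟨_, Finset.mem_image_of_mem _ hm₀P⟩
  set β := (P.image fun m => B.next m false).max' hPne with hβ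
  have hnext_sum : ∀ m, B.next m true + B.next m false = 1 := by
    intro m
    have := hPB.2.2.2.1 m
    rwa [Fintype.sum_bool] at this
  obtain ⟨m₁, hm₁P, hm₁β⟩ := Finset.mem_image.mp (Finset.max'_mem _ hPne)
  rw [← hβ] at hm₁β
  have hβ1 : β < 1 := by
    rw [← hm₁β]
    have h1 : B.next m₁ true ≠ 0 := (Finset.mem_filter.mp hm₁P).2
    have h2 : 0 ≤ B.next m₁ true := hPB.2.2.1 m₁ true
    have := hnext_sum m₁
    have h3 : 0 < B.next m₁ true := lt_of_le_of_ne h2 (Ne.symm h1)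
    linarith
  have hβ0 : 0 ≤ β := by
    rw [← hm₁β]
    exact hPB.2.2.1 m₁ false
  -- the geometric upper bound on cylinder probabilities of B
  have hσβ : ∀ j, oStrat B (W j) false ≤ β := by
    intro j
    have hle : ∀ m : Fin k, omemDist B (W j) m * B.next m false ≤ omemDist B (W j) m * β := by
      intro m
      rcases eq_or_ne (omemDist B (W j) m) 0 with h | h
      · rw [h, zero_mul, zero_mul]
      · apply mul_le_mul_of_nonneg_left _ (hBnonneg _ m)
        apply Finset.le_max'
        apply Finset.mem_image_of_mem
        exact Finset.mem_filter.mpr ⟨Finset.mem_univ _, hnext_true j m h⟩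
    calc oStrat B (W j) false = ∑ m, omemDist B (W j) m * B.next m false := rfl
      _ ≤ ∑ m, omemDist B (W j) m * β := Finset.sum_le_sum (fun m _ => hle m)
      _ = β := by rw [← Finset.sum_mul, hsum1 j, one_mul]
  have hcylB0 : 0 < cylProb (oStrat B) (W 0) := by
    rw [← hOE (W 0)]
    exact cylProb_pos _ _ (hWcons 0)
  have hcylβ : ∀ j, cylProb (oStrat B) (W j) ≤ cylProb (oStrat B) (W 0) * β ^ j := by
    intro j
    induction j with
    | zero => simp
    | succ j ih =>
      rw [hWsucc j, cylProb_append, pow_succ, ← mul_assoc]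
      exact mul_le_mul ih (hσβ j) (oStrat_nonneg B hPB _ _)
        (mul_nonneg (le_of_lt hcylB0) (pow_nonneg hβ0 _))
  -- the lower bound from N
  have hlow : ∀ j, cylProb (oStrat Nmach) (W 0) * (1 - 2*t₁) ≤ cylProb (oStrat Nmach) (W j) := by
    intro j
    have h := hWcyl j
    rw [← hW0] at h
    rw [← h]
    have h1 : 1 - 2 * tF j ≤ 1 := by linarith [ht0 j]
    have h2 : 0 ≤ cylProb (oStrat Nmach) (W j) := le_of_lt (cylProb_pos _ _ (hWcons j))
    nlinarith
  -- conclude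
  obtain ⟨j, hj⟩ := exists_pow_lt_of_lt_one (show (0:ℝ) < 1 - 2*t₁ by linarith) hβ1
  have hfinal : cylProb (oStrat Nmach) (W 0) * (1 - 2*t₁) ≤
      cylProb (oStrat Nmach) (W 0) * β ^ j := by
    calc cylProb (oStrat Nmach) (W 0) * (1 - 2*t₁)
        ≤ cylProb (oStrat Nmach) (W j) := hlow j
      _ = cylProb (oStrat B) (W j) := hOE (W j)
      _ ≤ cylProb (oStrat B) (W 0) * β ^ j := hcylβ j
      _ = cylProb (oStrat Nmach) (W 0) * β ^ j := by rw [← hOE (W 0)]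
  have hcylN0 : 0 < cylProb (oStrat Nmach) (W 0) := cylProb_pos _ _ (hWcons 0)
  have : (1 - 2*t₁) ≤ β ^ j := le_of_mul_le_mul_left hfinal hcylN0
  linarith
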